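/- arXiv:2010.08174 — 2 statements merged into one kernel-verified Lean document; each statement's English description precedes it below -/
import Mathlib

section
/- Donsker–Varadhan variational formula (one direction): for any bounded measurable function J and probability measures p ≪ q, E_p[J] ≤ D_KL(p‖q) + log E_q[exp(J)]. -/
open MeasureTheory Real Filter
open scoped Classical

/-- Kullback-Leibler divergence `D_KL(p ‖ q) = ∫ log (dp/dq) dp`, with value `⊤`
when `p` is not absolutely continuous w.r.t. `q` or the integral is not defined. -/

noncomputable def klDiv {Ω : Type*} [MeasurableSpace Ω] (p q : Measure Ω) : EReal :=
  if p ≪ q ∧ Integrable (llr p q) p then ((∫ x, llr p q x ∂p : ℝ) : EReal) else ⊤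

lemma kl_integral_nonneg {Ω : Type*} [MeasurableSpace Ω] (p ν : Measure Ω)
    [IsProbabilityMeasure p] [IsProbabilityMeasure ν] (h : p ≪ ν)
    (hint : Integrable (llr p ν) p) : 0 ≤ ∫ x, llr p ν x ∂p := by
  have h_eq : (fun x ↦ - llr p ν x) =ᵐ[p] fun x ↦ log ((ν.rnDeriv p x).toReal) := by
    filter_upwards [Measure.inv_rnDeriv h, Measure.rnDeriv_pos h,
      h.ae_le (Measure.rnDeriv_lt_top p ν)] with x hinv hpos hlt
    rw [← hinv, llr_def, ← Real.log_inv, Pi.inv_apply, ENNReal.toReal_inv]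
  have h_pos : ∀ᵐ x ∂p, 0 < (ν.rnDeriv p x).toReal := by
    filter_upwards [Measure.inv_rnDeriv h, Measure.rnDeriv_pos h,
      h.ae_le (Measure.rnDeriv_lt_top p ν)] with x hinv hpos hlt
    rw [← hinv, Pi.inv_apply]
    exact ENNReal.toReal_pos (by simp [hlt.ne]) (by simp [hpos.ne'])
  have h_le : ∫ x, - llr p ν x ∂p ≤ ∫ x, ((ν.rnDeriv p x).toReal - 1) ∂p := by
    refine integral_mono_ae hint.neg ((Measure.integrable_toReal_rnDeriv).sub
      (integrable_const 1)) ?_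
    filter_upwards [h_eq, h_pos] with x hx hx'
    rw [hx]
    exact Real.log_le_sub_one_of_pos hx'
  have h2 : ∫ x, ((ν.rnDeriv p x).toReal - 1) ∂p ≤ 0 := by
    rw [integral_sub Measure.integrable_toReal_rnDeriv (integrable_const 1)]
    simp only [integral_const, measure_univ, probReal_univ, ENNReal.toReal_one, smul_eq_mul, one_mul]
    have : ∫ x, (ν.rnDeriv p x).toReal ∂p ≤ (ν Set.univ).toReal := by
      rw [← setIntegral_univ]
      exact Measure.setIntegral_toReal_rnDeriv_le (measure_ne_top ν _)
    simp only [measure_univ, ENNReal.toReal_one] at this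
    linarith
  have := h_le.trans h2
  rw [integral_neg] at this
  linarith

theorem donsker_varadhan_le {Ω : Type*} [MeasurableSpace Ω] (p q : Measure Ω)
    [IsProbabilityMeasure p] [IsProbabilityMeasure q] (hpq : p ≪ q)
    (J : Ω → ℝ) (hJ : Measurable J) {M : ℝ} (hM : ∀ x, |J x| ≤ M) :
    ((∫ x, J x ∂p : ℝ) : EReal)
      ≤ klDiv p q + ((Real.log (∫ x, Real.exp (J x) ∂q) : ℝ) : EReal) := by
  by_cases hint : Integrable (llr p q) p
  · -- real case
    have hJp : Integrable J p := by
      refine Integrable.mono' (integrable_const M) hJ.aestronglyMeasurable ?_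
      exact Eventually.of_forall fun x ↦ hM x
    have hexp : Integrable (fun x ↦ Real.exp (J x)) q := by
      refine Integrable.mono' (integrable_const (Real.exp M)) (hJ.exp).aestronglyMeasurable ?_
      exact Eventually.of_forall fun x ↦ by
        rw [Real.norm_eq_abs, abs_of_pos (Real.exp_pos _)]
        exact Real.exp_le_exp.mpr ((le_abs_self _).trans (hM x))
    have hν : IsProbabilityMeasure (q.tilted J) := isProbabilityMeasure_tilted hexp
    have hpν : p ≪ q.tilted J := hpq.trans (absolutelyContinuous_tilted hexp)
    have hintν : Integrable (llr p (q.tilted J)) p :=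
      integrable_llr_tilted_right hpq hJp hint hexp
    have hkey := integral_llr_tilted_right hpq hJp hexp hint
    have hnn := kl_integral_nonneg p (q.tilted J) hpν hintν
    rw [hkey] at hnn
    have hreal : ∫ x, J x ∂p ≤ ∫ x, llr p q x ∂p + Real.log (∫ x, Real.exp (J x) ∂q) := by
      linarith
    rw [klDiv, if_pos ⟨hpq, hint⟩, ← EReal.coe_add]
    exact_mod_cast hreal
  · rw [klDiv, if_neg (by tauto)]
    rw [EReal.top_add_of_ne_bot (by simp)]
    exact le_top
end

section
/- Donsker–Varadhan variational formula: for a bounded measurable function J, log E_q[exp(J)] = sup over probability measures p ≪ q of (E_p[J] − D_KL(p‖q)), and the supremum is attained by the tilted measure dp* = exp(J)/E_q[exp(J)] dq. -/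
open MeasureTheory Real Filter
open scoped Classical

lemma gibbs_nonneg {Ω : Type*} [MeasurableSpace Ω] (p q : Measure Ω)
    [IsProbabilityMeasure p] [IsProbabilityMeasure q] (hpq : p ≪ q)
    (hint : Integrable (llr p q) p) : 0 ≤ ∫ x, llr p q x ∂p := by
  have h1 : Integrable (fun x ↦ (q.rnDeriv p x).toReal) p :=
    Measure.integrable_toReal_rnDeriv
  have heq : (fun x ↦ exp (- llr p q x)) =ᵐ[p] fun x ↦ (q.rnDeriv p x).toReal :=
    exp_neg_llr hpq
  have h2 : Integrable (fun x ↦ exp (- llr p q x)) p := h1.congr heq.symm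
  have hJen : exp (∫ x, - llr p q x ∂p) ≤ ∫ x, exp (- llr p q x) ∂p :=
    convexOn_exp.map_integral_le continuous_exp.continuousOn isClosed_univ
      (Filter.Eventually.of_forall fun x ↦ Set.mem_univ _) hint.neg h2
  have h3 : ∫ x, exp (- llr p q x) ∂p ≤ 1 := by
    rw [integral_congr_ae heq]
    calc ∫ x, (q.rnDeriv p x).toReal ∂p
        = ∫ x in Set.univ, (q.rnDeriv p x).toReal ∂p := setIntegral_univ.symm
      _ ≤ (q Set.univ).toReal := Measure.setIntegral_toReal_rnDeriv_le (measure_ne_top q _)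
      _ = 1 := by simp
  have h4 : exp (∫ x, - llr p q x ∂p) ≤ 1 := hJen.trans h3
  rw [Real.exp_le_one_iff, integral_neg, neg_nonpos] at h4
  exact h4

theorem donsker_varadhan {Ω : Type*} [MeasurableSpace Ω] (q : Measure Ω)
    [IsProbabilityMeasure q]
    (J : Ω → ℝ) (hJ : Measurable J) {M : ℝ} (hM : ∀ x, |J x| ≤ M) :
    ((Real.log (∫ x, Real.exp (J x) ∂q) : ℝ) : EReal)
        = sSup {r : EReal | ∃ p : Measure Ω, IsProbabilityMeasure p ∧ p ≪ q ∧
            r = ((∫ x, J x ∂p : ℝ) : EReal) - klDiv p q} ∧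
      ((∫ x, J x ∂(q.tilted J) : ℝ) : EReal) - klDiv (q.tilted J) q
        = ((Real.log (∫ x, Real.exp (J x) ∂q) : ℝ) : EReal) := by
  set Z : ℝ := ∫ x, Real.exp (J x) ∂q with hZ
  have hexp : Integrable (fun x ↦ exp (J x)) q :=
    (integrable_const (exp M)).mono' hJ.exp.aestronglyMeasurable
      (Filter.Eventually.of_forall fun x ↦ by
        rw [Real.norm_eq_abs, abs_of_pos (exp_pos _)]
        exact exp_le_exp.mpr ((abs_le.mp (hM x)).2))
  have hJint : ∀ (p : Measure Ω), IsProbabilityMeasure p → Integrable J p := by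
    intro p _
    exact (integrable_const M).mono' hJ.aestronglyMeasurable
      (Filter.Eventually.of_forall fun x ↦ by rw [Real.norm_eq_abs]; exact hM x)
  haveI hP : IsProbabilityMeasure (q.tilted J) := isProbabilityMeasure_tilted hexp
  -- llr of tilted measure
  have hqq : llr q q =ᵐ[q] 0 := by
    filter_upwards [Measure.rnDeriv_self q] with x hx
    simp [llr, hx]
  have hllr_q : llr (q.tilted J) q =ᵐ[q] fun x ↦ J x - Real.log Z := by
    filter_upwards [llr_tilted_left Measure.AbsolutelyContinuous.rfl hexp hJ.aemeasurable, hqq]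
      with x hx hx0
    rw [hx, hx0]; simp [hZ]
  have hllr_star : llr (q.tilted J) q =ᵐ[q.tilted J] fun x ↦ J x - Real.log Z :=
    (tilted_absolutelyContinuous q J).ae_le hllr_q
  have hstar_int : Integrable (llr (q.tilted J) q) (q.tilted J) :=
    Integrable.congr ((hJint _ hP).sub (integrable_const _)) hllr_star.symm
  have hstar_val : ∫ x, llr (q.tilted J) q x ∂(q.tilted J)
      = ∫ x, J x ∂(q.tilted J) - Real.log Z := by
    rw [integral_congr_ae hllr_star, integral_sub (hJint _ hP) (integrable_const _)]
    simp
  have hmem : ((∫ x, J x ∂(q.tilted J) : ℝ) : EReal) - klDiv (q.tilted J) q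
      = ((Real.log Z : ℝ) : EReal) := by
    rw [klDiv, if_pos ⟨tilted_absolutelyContinuous q J, hstar_int⟩, hstar_val,
      ← EReal.coe_sub]
    exact congrArg _ (by ring)
  refine ⟨le_antisymm ?_ ?_, hmem⟩
  · exact le_sSup ⟨q.tilted J, hP, tilted_absolutelyContinuous q J, hmem.symm⟩
  · refine sSup_le ?_
    rintro r ⟨p, hp, hpq, rfl⟩
    by_cases hc : p ≪ q ∧ Integrable (llr p q) p
    · rw [klDiv, if_pos hc]
      rw [← EReal.coe_sub, EReal.coe_le_coe_iff]
      have hpν : p ≪ q.tilted J := hpq.trans (absolutelyContinuous_tilted hexp)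
      have hint2 : Integrable (llr p (q.tilted J)) p :=
        integrable_llr_tilted_right hpq (hJint p hp) hc.2 hexp
      have h0 : 0 ≤ ∫ x, llr p (q.tilted J) x ∂p := gibbs_nonneg p _ hpν hint2
      have hval : ∫ x, llr p (q.tilted J) x ∂p
          = ∫ x, llr p q x ∂p - ∫ x, J x ∂p + Real.log Z :=
        integral_llr_tilted_right hpq (hJint p hp) hexp hc.2
      rw [hval] at h0
      linarith
    · rw [klDiv, if_neg hc]
      rw [EReal.sub_top]  -- a - ⊤ = ⊥? adjust if needed
      exact bot_le
end
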